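/- Let C and D be two neural codes in F_2^n. Then D ⊆ ^cC if and only if \overline{\overline{D}^p} ⊆ ^c(C^p), where both complements on the right are taken in F_2^{2n}. -/

import Mathlib

open MvPolynomial

/-- The field with two elements. -/
abbrev F2 := ZMod 2

/-- A motif indexed by `ι`: at each index it is `0`, `1`, or `*` (represented by `none`). -/
abbrev Motif (ι : Type*) := ι → Option F2

/-- The partial order on motifs: `a ≤ b` iff `a i = b i` for every index `i` with `b i ≠ *`. -/
def MotifLE {ι : Type*} (a b : Motif ι) : Prop :=
  ∀ (i : ι) (x : F2), b i = some x → a i = some x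

/-- The variety of a motif: all words agreeing with the motif on its non-`*` coordinates. -/
def variety {ι : Type*} (a : Motif ι) : Set (ι → F2) :=
  {w | ∀ (i : ι) (x : F2), a i = some x → w i = x}

/-- `a` is a motif of the code `C` iff its variety is contained in `C`. -/
def IsMotifOf {ι : Type*} (C : Set (ι → F2)) (a : Motif ι) : Prop :=
  variety a ⊆ C

/-- The set of maximal motifs of a code `C`. -/
def maxMot {ι : Type*} (C : Set (ι → F2)) : Set (Motif ι) :=
  {a | IsMotifOf C a ∧ ∀ b : Motif ι, IsMotifOf C b → MotifLE a b → a = b}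

/-- Two motifs are disjoint if at some index both are non-`*` and they differ. -/
def DisjointMotifs {ι : Type*} (a b : Motif ι) : Prop :=
  ∃ (i : ι) (x : F2), a i = some x ∧ b i = some (1 - x)

/-- Polarization of a motif of length `n`, as a motif of length `2n`
(indexed by `Fin n ⊕ Fin n`; `Sum.inl i` is coordinate `i`, `Sum.inr i` is coordinate `n+i`). -/
def polMotif {n : ℕ} (a : Motif (Fin n)) : Motif (Fin n ⊕ Fin n)
  | Sum.inl i => if a i = some 0 then some 0 else none
  | Sum.inr i => if a i = some 1 then some 0 else none

/-- The bar of a motif: `0 ↦ 1`, `1 ↦ 0`, `* ↦ *`. -/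
def barMotif {ι : Type*} (a : Motif ι) : Motif ι :=
  fun i => (a i).map (fun x => 1 - x)

/-- The polarization of a code `C ⊆ F₂ⁿ`: the union of the varieties of the
polarizations of the maximal motifs of `C`. -/
def polCode {n : ℕ} (C : Set (Fin n → F2)) : Set ((Fin n ⊕ Fin n) → F2) :=
  ⋃ a ∈ maxMot C, variety (polMotif a)

/-- The code `over-over-D-p` : the union of the varieties of `bar (pol (bar b))`
over the maximal motifs `b` of `D`. -/
def barPolBarCode {n : ℕ} (D : Set (Fin n → F2)) : Set ((Fin n ⊕ Fin n) → F2) :=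
  ⋃ b ∈ maxMot D, variety (barMotif (polMotif (barMotif b)))

/-- The formal polarization of a code `C`: the complement of `barPolBarCode` of `Cᶜ`. -/
def formalPol {n : ℕ} (C : Set (Fin n → F2)) : Set ((Fin n ⊕ Fin n) → F2) :=
  (barPolBarCode Cᶜ)ᶜ

/-- The Lagrange polynomial of a motif. -/
noncomputable def lagrange {ι : Type*} [Fintype ι] (a : Motif ι) : MvPolynomial ι F2 :=
  (∏ i ∈ Finset.univ.filter (fun i => a i = some 1), X i) *
    ∏ j ∈ Finset.univ.filter (fun j => a j = some 0), (1 - X j)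

/-- The motif (with no stars) corresponding to a word. -/
def wordMotif {ι : Type*} (w : ι → F2) : Motif ι := fun i => some (w i)

/-- The neural ideal of a code: generated by the Lagrange polynomials of the
words in the complement of the code. -/
noncomputable def neuralIdeal {ι : Type*} [Fintype ι] (C : Set (ι → F2)) :
    Ideal (MvPolynomial ι F2) :=
  Ideal.span ((fun w => lagrange (wordMotif w)) '' Cᶜ)

/-- The pseudo-monomial `∏_{i ∈ σ} X i * ∏_{j ∈ τ} (1 - X j)`. -/
noncomputable def pm {ι : Type*} (σ τ : Finset ι) : MvPolynomial ι F2 :=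
  (∏ i ∈ σ, X i) * ∏ j ∈ τ, (1 - X j)

/-- A polynomial is a pseudo-monomial if it equals `pm σ τ` for disjoint `σ τ`. -/
def IsPseudoMonomial {ι : Type*} (f : MvPolynomial ι F2) : Prop :=
  ∃ σ τ : Finset ι, Disjoint σ τ ∧ f = pm σ τ

/-- The canonical form of an ideal: the set of its minimal pseudo-monomials, i.e.
pseudo-monomials `f ∈ I` such that no pseudo-monomial `g ∈ I` of strictly smaller
degree divides `f`. -/
def CF {ι : Type*} (I : Ideal (MvPolynomial ι F2)) : Set (MvPolynomial ι F2) :=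
  {f | IsPseudoMonomial f ∧ f ∈ I ∧
    ¬ ∃ g : MvPolynomial ι F2, IsPseudoMonomial g ∧ g ∈ I ∧
      g.totalDegree < f.totalDegree ∧ g ∣ f}

/-- The polarization of the pseudo-monomial with data `(σ, τ)`:
`∏_{i ∈ σ} X i * ∏_{j ∈ τ} Y j` (here `Y j = X (Sum.inr j)`). -/
noncomputable def ppm {n : ℕ} (σ τ : Finset (Fin n)) : MvPolynomial (Fin n ⊕ Fin n) F2 :=
  (∏ i ∈ σ, X (Sum.inl i)) * ∏ j ∈ τ, X (Sum.inr j)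

/-- `g` is the polarization of the pseudo-monomial `f`. -/
def PolPM {n : ℕ} (f : MvPolynomial (Fin n) F2) (g : MvPolynomial (Fin n ⊕ Fin n) F2) : Prop :=
  ∃ σ τ : Finset (Fin n), Disjoint σ τ ∧ f = pm σ τ ∧ g = ppm σ τ

/-- The set of polarizations of the elements of a set of pseudo-monomials. -/
def polSet {n : ℕ} (S : Set (MvPolynomial (Fin n) F2)) :
    Set (MvPolynomial (Fin n ⊕ Fin n) F2) :=
  {g | ∃ f ∈ S, PolPM f g}

/-- The prime ideal of a motif: generated by `X i` for `a i = 0`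
and `1 - X j` for `a j = 1`. -/
noncomputable def pIdeal {ι : Type*} (a : Motif ι) : Ideal (MvPolynomial ι F2) :=
  Ideal.span ({f | ∃ i, a i = some 0 ∧ f = X i} ∪ {f | ∃ j, a j = some 1 ∧ f = 1 - X j})
lemma motifLE_refl {ι : Type*} (a : Motif ι) : MotifLE a a := fun _ _ h => h

lemma motifLE_trans {ι : Type*} {a b c : Motif ι} (h1 : MotifLE a b) (h2 : MotifLE b c) :
    MotifLE a c := fun i x h => h1 i x (h2 i x h)

lemma exists_maxMot {n : ℕ} (C : Set (Fin n → F2)) (b : Motif (Fin n)) (hb : IsMotifOf C b) :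
    ∃ a ∈ maxMot C, MotifLE b a := by
  generalize hk : (Finset.univ.filter (fun i => b i ≠ none)).card = k
  induction k using Nat.strong_induction_on generalizing b with
  | _ k ih =>
    by_cases hmax : ∀ c, IsMotifOf C c → MotifLE b c → b = c
    · exact ⟨b, ⟨hb, hmax⟩, motifLE_refl b⟩
    · push_neg at hmax
      obtain ⟨c, hc, hbc, hne⟩ := hmax
      have hlt : (Finset.univ.filter (fun i => c i ≠ none)).card < k := by
        subst hk
        apply Finset.card_lt_card
        constructor
        · intro i hi
          simp only [Finset.mem_filter, Finset.mem_univ, true_and] at *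
          intro hbn
          cases hci : c i with
          | none => exact hi hci
          | some x =>
            have := hbc i x hci
            rw [hbn] at this
            cases this
        · intro hsub
          apply hne
          funext i
          cases hci : c i with
          | none =>
            cases hbi : b i with
            | none => rfl
            | some x =>
              have := hsub (by simp [hbi] : i ∈ Finset.univ.filter (fun i => b i ≠ none))
              simp [hci] at this
          | some x => rw [hbc i x hci]
      obtain ⟨a, ha, hca⟩ := ih _ hlt c hc rfl
      exact ⟨a, ha, motifLE_trans hbc hca⟩

lemma pol_inl {n : ℕ} (a : Motif (Fin n)) (i : Fin n) :
    polMotif a (Sum.inl i) = if a i = some 0 then some 0 else none := rfl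

lemma pol_inr {n : ℕ} (a : Motif (Fin n)) (i : Fin n) :
    polMotif a (Sum.inr i) = if a i = some 1 then some 0 else none := rfl

lemma bpb_inl {n : ℕ} (b : Motif (Fin n)) (i : Fin n) :
    barMotif (polMotif (barMotif b)) (Sum.inl i) = if b i = some 1 then some 1 else none := by
  cases hb : b i with
  | none => simp [barMotif, polMotif, hb]
  | some x => fin_cases x <;> simp [barMotif, polMotif, hb] <;> decide

lemma bpb_inr {n : ℕ} (b : Motif (Fin n)) (i : Fin n) :
    barMotif (polMotif (barMotif b)) (Sum.inr i) = if b i = some 0 then some 1 else none := by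
  cases hb : b i with
  | none => simp [barMotif, polMotif, hb]
  | some x => fin_cases x <;> simp [barMotif, polMotif, hb]

lemma key_forward {n : ℕ} {a b : Motif (Fin n)} {u : (Fin n ⊕ Fin n) → F2}
    (hu1 : u ∈ variety (polMotif a)) (hu2 : u ∈ variety (barMotif (polMotif (barMotif b)))) :
    ∃ w, w ∈ variety a ∧ w ∈ variety b := by
  refine ⟨fun i => (a i).getD ((b i).getD 0), ?_, ?_⟩
  · intro i x hx; simp [hx]
  · intro i y hy
    cases ha : a i with
    | none => simp [ha, hy]
    | some x =>
      simp only [ha, Option.getD_some]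
      by_contra hxy
      have hcase : (x = 0 ∧ y = 1) ∨ (x = 1 ∧ y = 0) := by
        exact (by decide : ∀ x y : F2, ¬ x = y → (x = 0 ∧ y = 1) ∨ (x = 1 ∧ y = 0)) x y hxy
      rcases hcase with ⟨hx0, hy1⟩ | ⟨hx1, hy0⟩
      · subst hx0; subst hy1
        have h1 : u (Sum.inl i) = 0 := hu1 (Sum.inl i) 0 (by rw [pol_inl, if_pos ha])
        have h2 : u (Sum.inl i) = 1 := hu2 (Sum.inl i) 1 (by rw [bpb_inl, if_pos hy])
        exact absurd (h1.symm.trans h2) (by decide)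
      · subst hx1; subst hy0
        have h1 : u (Sum.inr i) = 0 := hu1 (Sum.inr i) 0 (by rw [pol_inr, if_pos ha])
        have h2 : u (Sum.inr i) = 1 := hu2 (Sum.inr i) 1 (by rw [bpb_inr, if_pos hy])
        exact absurd (h1.symm.trans h2) (by decide)

lemma key_backward {n : ℕ} {a b : Motif (Fin n)} {w : Fin n → F2}
    (hwa : w ∈ variety a) (hwb : w ∈ variety b) :
    Sum.elim w (fun i => 1 - w i) ∈ variety (polMotif a) ∧
    Sum.elim w (fun i => 1 - w i) ∈ variety (barMotif (polMotif (barMotif b))) := by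
  constructor
  · rintro (i | i) x hx
    · rw [pol_inl] at hx
      split_ifs at hx with h
      · obtain rfl : (0 : F2) = x := Option.some.inj hx
        simpa using hwa i 0 h
    · rw [pol_inr] at hx
      split_ifs at hx with h
      · obtain rfl : (0 : F2) = x := Option.some.inj hx
        simp [hwa i 1 h]
  · rintro (i | i) x hx
    · rw [bpb_inl] at hx
      split_ifs at hx with h
      · obtain rfl : (1 : F2) = x := Option.some.inj hx
        simpa using hwb i 1 h
    · rw [bpb_inr] at hx
      split_ifs at hx with h
      · obtain rfl : (1 : F2) = x := Option.some.inj hx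
        simp [hwb i 0 h]

lemma isMotifOf_wordMotif {n : ℕ} {C : Set (Fin n → F2)} {w : Fin n → F2} (hw : w ∈ C) :
    IsMotifOf C (wordMotif w) := by
  intro v hv
  have : v = w := funext fun i => hv i (w i) rfl
  rwa [this]

lemma mem_variety_of_le {n : ℕ} {w : Fin n → F2} {a : Motif (Fin n)}
    (h : MotifLE (wordMotif w) a) : w ∈ variety a :=
  fun i x hx => Option.some.inj (h i x hx)


/-- `D ⊆ ᶜC` iff `bar((bar D)ᵖ) ⊆ ᶜ(Cᵖ)`. -/
theorem subset_compl_iff_polarized {n : ℕ} (C D : Set (Fin n → F2)) :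
    D ⊆ Cᶜ ↔ barPolBarCode D ⊆ (polCode C)ᶜ := by
  rw [← not_iff_not]
  simp only [Set.not_subset, Set.notMem_compl_iff]
  constructor
  · rintro ⟨w, hwD, hwC⟩
    obtain ⟨a, ha, hla⟩ := exists_maxMot C (wordMotif w) (isMotifOf_wordMotif hwC)
    obtain ⟨b, hb, hlb⟩ := exists_maxMot D (wordMotif w) (isMotifOf_wordMotif hwD)
    obtain ⟨h1, h2⟩ := key_backward (mem_variety_of_le hla) (mem_variety_of_le hlb)
    exact ⟨_, Set.mem_biUnion hb h2, Set.mem_biUnion ha h1⟩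
  · rintro ⟨u, huD, huC⟩
    simp only [barPolBarCode, Set.mem_iUnion] at huD
    simp only [polCode, Set.mem_iUnion] at huC
    obtain ⟨b, hb, hub⟩ := huD
    obtain ⟨a, ha, hua⟩ := huC
    obtain ⟨w, hwa, hwb⟩ := key_forward hua hub
    exact ⟨w, hb.1 hwb, ha.1 hwa⟩
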